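/- Let f : ℝ → ℝ be continuous, nonnegative, with ∫_{τ₁}^{τ₂} f > 0 for all τ₁ < τ₂ and liminf_{τ→−∞} f(τ) > 0. If y is a C² solution of y'' = f·y on ℝ with y(τ) → 0 and y'(τ) → 0 as τ → −∞, and y(τ₀)·y'(τ₀) = 0 for some τ₀ ∈ ℝ, then y is identically zero on (−∞, τ₀]. -/

import Mathlib

open Filter Set

/-- Nondegeneracy lemma: if `y'' = f·y` with `f ≥ 0` continuous, `∫_{τ₁}^{τ₂} f > 0` for all
`τ₁ < τ₂`, `liminf_{−∞} f > 0`, `y, y' → 0` at `−∞` and `y(τ₀)y'(τ₀) = 0`, then `y ≡ 0`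
on `(−∞, τ₀]`. -/
theorem stmt8 (f y : ℝ → ℝ) (hf : Continuous f) (hf0 : ∀ τ, 0 ≤ f τ)
    (hfint : ∀ τ₁ τ₂ : ℝ, τ₁ < τ₂ → 0 < ∫ τ in τ₁..τ₂, f τ)
    (hliminfBot : 0 < Filter.liminf f Filter.atBot)
    (hy : ContDiff ℝ 2 y)
    (hode : ∀ τ, deriv (deriv y) τ = f τ * y τ)
    (hy0 : Filter.Tendsto y Filter.atBot (nhds 0))
    (hy'0 : Filter.Tendsto (deriv y) Filter.atBot (nhds 0))
    (τ₀ : ℝ) (hcross : y τ₀ * deriv y τ₀ = 0) :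
    ∀ τ ≤ τ₀, y τ = 0 := by
  have hdy : Differentiable ℝ y := hy.differentiable (by norm_num)
  have hy1 : ContDiff ℝ 1 (deriv y) := by
    have := (contDiff_succ_iff_deriv (n := 1)).mp (by exact_mod_cast hy)
    exact this.2.2
  have hdy' : Differentiable ℝ (deriv y) := hy1.differentiable (by norm_num)
  set E : ℝ → ℝ := fun τ => y τ * deriv y τ with hE
  have hE' : ∀ τ, HasDerivAt E ((deriv y τ) ^ 2 + f τ * (y τ) ^ 2) τ := by
    intro τ
    have h := ((hdy τ).hasDerivAt.mul (hdy' τ).hasDerivAt)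
    exact h.congr_deriv (by rw [hode τ]; ring)
  have hEdiff : Differentiable ℝ E := fun τ => (hE' τ).differentiableAt
  have hEderiv : ∀ τ, deriv E τ = (deriv y τ) ^ 2 + f τ * (y τ) ^ 2 :=
    fun τ => (hE' τ).deriv
  have hmono : Monotone E := by
    apply monotone_of_deriv_nonneg hEdiff
    intro τ
    rw [hEderiv τ]
    exact add_nonneg (sq_nonneg _) (mul_nonneg (hf0 τ) (sq_nonneg _))
  have hE0 : Tendsto E atBot (nhds 0) := by
    simpa using hy0.mul hy'0
  have hEz : ∀ τ ≤ τ₀, E τ = 0 := by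
    intro τ hτ
    refine le_antisymm (by simpa [E, hcross] using hmono hτ) ?_
    exact le_of_tendsto hE0 (eventually_atBot.2 ⟨τ, fun s hs => hmono hs⟩)
  have hy'z : ∀ τ < τ₀, deriv y τ = 0 := by
    intro τ hτ
    have heq : E =ᶠ[nhds τ] fun _ => (0 : ℝ) := by
      filter_upwards [Iio_mem_nhds hτ] with s hs
      exact hEz s (le_of_lt hs)
    have : deriv E τ = 0 := by
      rw [heq.deriv_eq]; simp
    rw [hEderiv τ] at this
    have h1 : (deriv y τ) ^ 2 = 0 :=
      le_antisymm (by nlinarith [mul_nonneg (hf0 τ) (sq_nonneg (y τ))]) (sq_nonneg _)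
    exact pow_eq_zero_iff (by norm_num) |>.mp h1
  have hyz : ∀ τ < τ₀, y τ = 0 := by
    intro τ hτ
    have hconst : ∀ s ≤ τ, y s = y τ := by
      intro s hs
      rcases eq_or_lt_of_le hs with rfl | hs
      · rfl
      · obtain ⟨c, hc, hc'⟩ := exists_deriv_eq_slope y hs
          (hy.continuous.continuousOn) hdy.differentiableOn
        rw [hy'z c (hc.2.trans hτ)] at hc'
        have hne : τ - s ≠ 0 := sub_ne_zero.2 (ne_of_gt hs)
        field_simp at hc'
        linarith
    have : Tendsto y atBot (nhds (y τ)) := by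
      refine Tendsto.congr' ?_ tendsto_const_nhds
      filter_upwards [eventually_le_atBot τ] with s hs
      exact (hconst s hs).symm
    exact (tendsto_nhds_unique hy0 this).symm
  intro τ hτ
  rcases eq_or_lt_of_le hτ with rfl | hτ
  · have hts : Tendsto y (nhdsWithin τ (Iio τ)) (nhds (y τ)) :=
      (hy.continuous.continuousAt).continuousWithinAt
    have hts0 : Tendsto y (nhdsWithin τ (Iio τ)) (nhds 0) := by
      refine Tendsto.congr' ?_ tendsto_const_nhds
      filter_upwards [self_mem_nhdsWithin] with s hs
      exact (hyz s hs).symm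
    exact tendsto_nhds_unique hts hts0
  · exact hyz τ hτ
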